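/- Let pq be a primitive word and E a one-variable word equation. Then the intersection sol(E) ∩ [(pq)^+ p] is either all of [(pq)^+ p] or contains at most one element. -/

import Mathlib

/-- Substitute the word `x` for the variable (represented by `none`) in a word
over `Option Γ` (constants are `some a`). -/
def subst {Γ : Type*} (x : List Γ) (U : List (Option Γ)) : List Γ :=
  U.flatMap fun c => c.elim x fun a => [a]

/-- `listPow w k` is the word `w^k`. -/
def listPow {Γ : Type*} (w : List Γ) (k : ℕ) : List Γ :=
  (List.replicate k w).flatten

/-- A word is primitive if it is nonempty and not a proper power. -/
def Primitive {Γ : Type*} (p : List Γ) : Prop :=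
  p ≠ [] ∧ ∀ (q : List Γ) (k : ℕ), p = listPow q k → k = 1

namespace SolPQP
open List
variable {Γ : Type*}

/-! ### listPow basics -/

lemma listPow_zero (w : List Γ) : listPow w 0 = [] := rfl

lemma listPow_succ (w : List Γ) (k : ℕ) : listPow w (k+1) = w ++ listPow w k := by
  simp [listPow, List.replicate_succ]

lemma listPow_one (w : List Γ) : listPow w 1 = w := by
  rw [listPow_succ, listPow_zero, List.append_nil]

lemma listPow_add (w : List Γ) (a b : ℕ) :
    listPow w (a+b) = listPow w a ++ listPow w b := by
  unfold listPow
  rw [List.replicate_add, List.flatten_append]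

lemma listPow_length (w : List Γ) (k : ℕ) : (listPow w k).length = k * w.length := by
  induction k with
  | zero => simp [listPow_zero]
  | succ k ih => simp [listPow_succ, ih]; ring

lemma listPow_comm (w : List Γ) (a b : ℕ) :
    listPow w a ++ listPow w b = listPow w b ++ listPow w a := by
  rw [← listPow_add, ← listPow_add, Nat.add_comm]

/-! ### subst basics -/

lemma subst_nil (x : List Γ) : subst x ([] : List (Option Γ)) = [] := rfl

lemma subst_cons_none (x : List Γ) (W : List (Option Γ)) :
    subst x (none :: W) = x ++ subst x W := by
  simp [subst]

lemma subst_cons_some (x : List Γ) (a : Γ) (W : List (Option Γ)) :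
    subst x (some a :: W) = a :: subst x W := by
  simp [subst]

lemma subst_append (x : List Γ) (A B : List (Option Γ)) :
    subst x (A ++ B) = subst x A ++ subst x B := by
  simp [subst]

lemma subst_lift (x c : List Γ) : subst x (c.map some) = c := by
  induction c with
  | nil => rfl
  | cons a c ih => simp [subst_cons_some, ih]

lemma subst_block (x u₀ : List Γ) (W : List (Option Γ)) :
    subst x (u₀.map some ++ none :: W) = u₀ ++ (x ++ subst x W) := by
  rw [subst_append, subst_lift, subst_cons_none]

lemma subst_length (x : List Γ) (W : List (Option Γ)) :
    (subst x W).length =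
      (W.countP (fun c => c.isNone)) * x.length + W.countP (fun c => c.isSome) := by
  induction W with
  | nil => simp [subst_nil]
  | cons c W ih =>
    cases c with
    | none => simp [subst_cons_none, List.countP_cons, ih]; ring
    | some a => simp [subst_cons_some, List.countP_cons, ih]; omega

lemma subst_const {W : List (Option Γ)} (h : W.countP (fun c => c.isNone) = 0)
    (x y : List Γ) : subst x W = subst y W := by
  induction W with
  | nil => rfl
  | cons c W ih =>
    cases c with
    | none => simp [List.countP_cons] at h
    | some a =>
      rw [List.countP_cons] at h
      simp only [Option.isNone_some, if_false, Bool.false_eq_true, add_zero] at h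
      rw [subst_cons_some, subst_cons_some, ih h]

lemma exists_block {W : List (Option Γ)} (h : W.countP (fun c => c.isNone) ≠ 0) :
    ∃ (w₀ : List Γ) (W₁ : List (Option Γ)), W = w₀.map some ++ none :: W₁ := by
  induction W with
  | nil => simp at h
  | cons c W ih =>
    cases c with
    | none => exact ⟨[], W, rfl⟩
    | some a =>
      rw [List.countP_cons] at h
      simp only [Option.isNone_some, if_false, Bool.false_eq_true, add_zero] at h
      obtain ⟨w₀, W₁, rfl⟩ := ih h
      exact ⟨a :: w₀, W₁, rfl⟩

/-! ### commuting words have a common root -/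

lemma comm_common_root :
    ∀ (n : ℕ) (x y : List Γ), x.length + y.length ≤ n → x ++ y = y ++ x →
    ∃ (w : List Γ) (a b : ℕ), x = listPow w a ∧ y = listPow w b := by
  intro n
  induction n with
  | zero =>
    intro x y hlen _
    have hx : x = [] := by
      have := Nat.le_zero.mp hlen
      exact List.length_eq_zero_iff.mp (by omega)
    have hy : y = [] := by
      have := Nat.le_zero.mp hlen
      exact List.length_eq_zero_iff.mp (by omega)
    exact ⟨[], 0, 0, by simp [hx, listPow_zero], by simp [hy, listPow_zero]⟩
  | succ n ih =>
    intro x y hlen hc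
    rcases eq_or_ne x [] with rfl | hx
    · exact ⟨y, 0, 1, rfl, by rw [listPow_one]⟩
    rcases eq_or_ne y [] with rfl | hy
    · exact ⟨x, 1, 0, by rw [listPow_one], rfl⟩
    rcases le_total x.length y.length with hle | hle
    · have hxy : x <+: y := by
        refine List.prefix_of_prefix_length_le ⟨y, rfl⟩ ?_ hle
        rw [hc]; exact ⟨x, rfl⟩
      obtain ⟨y', rfl⟩ := hxy
      have hc' : x ++ y' = y' ++ x := by
        have h2 : x ++ (x ++ y') = x ++ (y' ++ x) := by
          rw [hc]; rw [List.append_assoc]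
        exact List.append_cancel_left h2
      have hlen' : x.length + y'.length ≤ n := by
        have hx1 : 1 ≤ x.length := List.length_pos_iff.mpr hx
        simp only [List.length_append] at hlen
        omega
      obtain ⟨w, a, b, hxa, hyb⟩ := ih x y' hlen' hc'
      exact ⟨w, a, a + b, hxa, by rw [listPow_add, ← hxa, ← hyb]⟩
    · have hyx : y <+: x := by
        refine List.prefix_of_prefix_length_le ⟨x, rfl⟩ ?_ hle
        rw [← hc]; exact ⟨y, rfl⟩
      obtain ⟨x', rfl⟩ := hyx
      have hc' : y ++ x' = x' ++ y := by
        have h2 : y ++ (y ++ x') = y ++ (x' ++ y) := by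
          rw [← hc]; rw [List.append_assoc]
        exact List.append_cancel_left h2
      have hlen' : y.length + x'.length ≤ n := by
        have hy1 : 1 ≤ y.length := List.length_pos_iff.mpr hy
        simp only [List.length_append] at hlen
        omega
      obtain ⟨w, a, b, hya, hxb⟩ := ih y x' hlen' hc'
      exact ⟨w, a + b, a, by rw [listPow_add, ← hya, ← hxb], hya⟩


/-! ### brk: longest agreement with the periodic word z^∞ starting at phase φ -/

open Classical in
noncomputable def brk (z : List Γ) : ℕ → List Γ → ℕ
  | _, [] => 0
  | φ, c :: X => if some c = z[φ % z.length]? then brk z (φ+1) X + 1 else 0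

lemma brk_nil (z : List Γ) (φ : ℕ) : brk z φ [] = 0 := rfl

open Classical in
lemma brk_cons (z : List Γ) (φ : ℕ) (c : Γ) (X : List Γ) :
    brk z φ (c :: X) = if some c = z[φ % z.length]? then brk z (φ+1) X + 1 else 0 := rfl

lemma brk_le_length (z : List Γ) (φ : ℕ) (X : List Γ) : brk z φ X ≤ X.length := by
  induction X generalizing φ with
  | nil => simp [brk_nil]
  | cons c X ih =>
    rw [brk_cons]
    split_ifs
    · simpa using ih (φ+1)
    · simp

lemma brk_congr (z : List Γ) {φ ψ : ℕ} (h : φ % z.length = ψ % z.length) (X : List Γ) :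
    brk z φ X = brk z ψ X := by
  induction X generalizing φ ψ with
  | nil => rfl
  | cons c X ih =>
    rw [brk_cons, brk_cons, h]
    have h1 : (φ + 1) % z.length = (ψ + 1) % z.length := by
      rw [Nat.add_mod φ 1, Nat.add_mod ψ 1, h]
    split_ifs
    · rw [ih h1]
    · rfl

/-- agreement of `X` with the `z`-periodic infinite word starting at phase `φ`. -/
def Agree (z : List Γ) (φ : ℕ) (X : List Γ) : Prop :=
  ∀ m, m < X.length → X[m]? = z[(φ + m) % z.length]?

lemma brk_eq_length_of_agree {z : List Γ} {φ : ℕ} {X : List Γ} (hag : Agree z φ X) :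
    brk z φ X = X.length := by
  induction X generalizing φ with
  | nil => rfl
  | cons c X ih =>
    have h0 : some c = z[φ % z.length]? := by
      have h := hag 0 (by simp)
      simp only [List.getElem?_cons_zero, Nat.add_zero] at h
      exact h
    rw [brk_cons, if_pos h0]
    have hag' : Agree z (φ+1) X := by
      intro m hm
      have := hag (m+1) (by simp; omega)
      rw [List.getElem?_cons_succ] at this
      rw [this]
      congr 2
      omega
    simp [ih hag']

lemma agree_of_brk_eq_length {z : List Γ} {φ : ℕ} {X : List Γ}
    (h : brk z φ X = X.length) : Agree z φ X := by
  induction X generalizing φ with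
  | nil => intro m hm; simp at hm
  | cons c X ih =>
    rw [brk_cons] at h
    split_ifs at h with h0
    · have h' : brk z (φ+1) X = X.length := by simpa using h
      intro m hm
      cases m with
      | zero =>
        rw [List.getElem?_cons_zero, Nat.add_zero, ← h0]
      | succ m =>
        rw [List.getElem?_cons_succ]
        have := ih h' m (by simpa using hm)
        rw [this]
        congr 2
        omega

lemma brk_append_of_lt {z : List Γ} {φ : ℕ} {X : List Γ} (h : brk z φ X < X.length)
    (Y : List Γ) : brk z φ (X ++ Y) = brk z φ X := by
  induction X generalizing φ with
  | nil => simp at h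
  | cons c X ih =>
    rw [List.cons_append, brk_cons, brk_cons]
    rw [brk_cons] at h
    split_ifs at h ⊢ with h0
    · have : brk z (φ+1) X < X.length := by simp at h; omega
      rw [ih this]
    · rfl

lemma brk_append_of_full {z : List Γ} {φ : ℕ} {X : List Γ} (h : brk z φ X = X.length)
    (Y : List Γ) : brk z φ (X ++ Y) = X.length + brk z (φ + X.length) Y := by
  induction X generalizing φ with
  | nil => simp
  | cons c X ih =>
    rw [List.cons_append, brk_cons]
    rw [brk_cons] at h
    split_ifs at h with h0
    · rw [if_pos h0]
      have h' : brk z (φ+1) X = X.length := by simpa using h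
      rw [ih h']
      have : φ + 1 + X.length = φ + (c :: X).length := by simp; omega
      rw [this]
      simp
      omega

lemma agree_z_self {z : List Γ} (hz : z ≠ []) {φ : ℕ} (hφ : φ % z.length = 0) :
    Agree z φ z := by
  intro m hm
  have : (φ + m) % z.length = m := by
    rw [Nat.add_mod, hφ]
    simp [Nat.mod_eq_of_lt hm]
  rw [this]

lemma brk_z_full {z : List Γ} (hz : z ≠ []) {φ : ℕ} (hφ : φ % z.length = 0) :
    brk z φ z = z.length :=
  brk_eq_length_of_agree (agree_z_self hz hφ)

lemma brk_listPow_append {z : List Γ} (hz : z ≠ []) {φ : ℕ} (hφ : φ % z.length = 0)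
    (k : ℕ) (Y : List Γ) :
    brk z φ (listPow z k ++ Y) = k * z.length + brk z φ Y := by
  induction k with
  | zero => simp [listPow_zero]
  | succ k ih =>
    rw [listPow_succ, List.append_assoc, brk_append_of_full (brk_z_full hz hφ)]
    rw [brk_congr z (Nat.add_mod_right φ z.length) (listPow z k ++ Y), ih]
    ring

/-- key primitivity fact: at a misaligned phase, `z` itself disagrees with the
periodic word somewhere within one period. -/
lemma prim_rot {z : List Γ} (hp : Primitive z) {ψ : ℕ} (hψ : ψ % z.length ≠ 0) :
    brk z ψ z < z.length := by
  have hz : z ≠ [] := hp.1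
  have hℓ : 0 < z.length := List.length_pos_iff.mpr hz
  by_contra hge
  push_neg at hge
  have hfull : brk z ψ z = z.length := le_antisymm (brk_le_length z ψ z) hge
  have hag := agree_of_brk_eq_length hfull
  set ℓ := z.length with hℓdef
  set c := ψ % ℓ with hcdef
  have hc1 : 0 < c := Nat.pos_of_ne_zero hψ
  have hc2 : c < ℓ := Nat.mod_lt _ hℓ
  have hag' : ∀ m, m < ℓ → z[m]? = z[(c + m) % ℓ]? := by
    intro m hm
    have := hag m hm
    rw [this]
    congr 1
    conv_lhs => rw [Nat.add_mod ψ m]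
    conv_rhs => rw [Nat.add_mod c m]
    rw [show c % ℓ = c from Nat.mod_eq_of_lt hc2, hcdef]
  have hdt : z.drop c ++ z.take c = z := by
    apply List.ext_getElem?
    intro m
    by_cases hm : m < ℓ
    · by_cases hm2 : m < ℓ - c
      · rw [List.getElem?_append_left (by rw [List.length_drop]; omega)]
        rw [List.getElem?_drop]
        have h1 := hag' m hm
        have h2 : (c + m) % ℓ = c + m := Nat.mod_eq_of_lt (by omega)
        rw [h2] at h1
        exact h1.symm
      · rw [List.getElem?_append_right (by rw [List.length_drop]; omega)]
        rw [List.length_drop, List.getElem?_take, if_pos (by omega)]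
        have h1 := hag' m hm
        have h2 : (c + m) % ℓ = m - (ℓ - c) := by
          rw [Nat.mod_eq_sub_mod (by omega), Nat.mod_eq_of_lt (by omega)]
          omega
        rw [h2] at h1
        exact h1.symm
    · have e1 : (z.drop c ++ z.take c).length = ℓ := by
        rw [List.length_append, List.length_drop, List.length_take]
        omega
      rw [List.getElem?_eq_none (by omega), List.getElem?_eq_none (by omega)]
  have comm : z.take c ++ z.drop c = z.drop c ++ z.take c := by
    rw [List.take_append_drop, hdt]
  obtain ⟨w, α, β, hta, hdb⟩ :=
    comm_common_root ((z.take c).length + (z.drop c).length) (z.take c) (z.drop c) le_rfl comm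
  have hzz : z = listPow w (α + β) := by
    rw [listPow_add, ← hta, ← hdb, List.take_append_drop]
  have h1 : α + β = 1 := hp.2 w _ hzz
  have hα : α ≠ 0 := by
    intro h; subst h
    rw [listPow_zero] at hta
    rw [List.take_eq_nil_iff] at hta
    rcases hta with h | h
    · omega
    · exact hz h
  have hβ : β ≠ 0 := by
    intro h; subst h
    rw [listPow_zero] at hdb
    rw [List.drop_eq_nil_iff] at hdb
    omega
  omega



lemma brk_misaligned {z : List Γ} (hp : Primitive z) {ψ : ℕ} (hψ : ψ % z.length ≠ 0)
    {k : ℕ} (hk : 1 ≤ k) (Y : List Γ) :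
    brk z ψ (listPow z k ++ Y) = brk z ψ z := by
  obtain ⟨k', rfl⟩ : ∃ k', k = k' + 1 := ⟨k - 1, by omega⟩
  rw [show k' + 1 = 1 + k' from by omega, listPow_add, listPow_one, List.append_assoc]
  exact brk_append_of_lt (prim_rot hp hψ) _

lemma dichotomy {z : List Γ} (hp : Primitive z) (W : List (Option Γ)) (φ : ℕ) :
    (∀ k, 1 ≤ k → brk z φ (subst (listPow z k) W) = (subst (listPow z k) W).length) ∨
    (∃ ν κ, ∀ k, 1 ≤ k → brk z φ (subst (listPow z k) W) = ν * (k * z.length) + κ) := by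
  have hz : z ≠ [] := hp.1
  induction W generalizing φ with
  | nil => left; intro k _; rfl
  | cons c W ih =>
    cases c with
    | some a =>
      by_cases h0 : some a = z[φ % z.length]?
      · rcases ih (φ + 1) with hfull | ⟨ν, κ, haff⟩
        · left; intro k hk
          rw [subst_cons_some, brk_cons, if_pos h0, hfull k hk, List.length_cons]
        · right
          exact ⟨ν, κ + 1, fun k hk => by
            rw [subst_cons_some, brk_cons, if_pos h0, haff k hk]; omega⟩
      · right
        exact ⟨0, 0, fun k hk => by
          rw [subst_cons_some, brk_cons, if_neg h0]; simp⟩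
    | none =>
      by_cases hφ : φ % z.length = 0
      · rcases ih φ with hfull | ⟨ν, κ, haff⟩
        · left; intro k hk
          rw [subst_cons_none, brk_listPow_append hz hφ, hfull k hk,
            List.length_append, listPow_length]
        · right
          exact ⟨ν + 1, κ, fun k hk => by
            rw [subst_cons_none, brk_listPow_append hz hφ, haff k hk]; ring⟩
      · right
        exact ⟨0, brk z φ z, fun k hk => by
          rw [subst_cons_none, brk_misaligned hp hφ hk]; omega⟩

lemma kill {z : List Γ} (hp : Primitive z) (U₁ V₁ : List (Option Γ)) (tb : List Γ)
    (a i j : ℕ) (hi : 1 ≤ i) (hij : i < j) (htb : tb ≠ []) (hnp : ¬ z <+: tb)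
    (hRi : listPow z i ++ subst (listPow z i) U₁ =
      listPow z a ++ (tb ++ (listPow z i ++ subst (listPow z i) V₁)))
    (hRj : listPow z j ++ subst (listPow z j) U₁ =
      listPow z a ++ (tb ++ (listPow z j ++ subst (listPow z j) V₁))) : False := by
  have hz : z ≠ [] := hp.1
  have hℓ : 0 < z.length := List.length_pos_iff.mpr hz
  have hj : 1 ≤ j := le_trans hi hij.le
  have hμ : ∃ μ, ∀ k, 1 ≤ k → ∀ B : List Γ, brk z 0 (tb ++ (listPow z k ++ B)) = μ := by
    rcases lt_or_eq_of_le (brk_le_length z 0 tb) with hlt | heq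
    · exact ⟨brk z 0 tb, fun k _ B => brk_append_of_lt hlt _⟩
    · have hag := agree_of_brk_eq_length heq
      have htblt : tb.length < z.length := by
        by_contra hge
        push_neg at hge
        apply hnp
        refine ⟨tb.drop z.length, ?_⟩
        have hzt : tb.take z.length = z := by
          apply List.ext_getElem?
          intro m
          by_cases hm : m < z.length
          · rw [List.getElem?_take, if_pos hm]
            have h := hag m (by omega)
            rw [h, Nat.zero_add, Nat.mod_eq_of_lt hm]
          · rw [List.getElem?_eq_none (l := tb.take z.length) (by
                rw [List.length_take]
                exact le_trans (Nat.min_le_left _ _) (by omega)),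
              List.getElem?_eq_none (by omega)]
        have h2 := List.take_append_drop z.length tb
        rw [hzt] at h2
        exact h2
      have hψ : tb.length % z.length ≠ 0 := by
        rw [Nat.mod_eq_of_lt htblt]
        intro h
        exact htb (List.length_eq_zero_iff.mp h)
      refine ⟨tb.length + brk z tb.length z, fun k hk B => ?_⟩
      rw [brk_append_of_full heq, Nat.zero_add, brk_misaligned hp hψ hk]
  obtain ⟨μ, hμ⟩ := hμ
  have h0 : (0:ℕ) % z.length = 0 := Nat.zero_mod _
  have Ei : i * z.length + brk z 0 (subst (listPow z i) U₁) = a * z.length + μ := by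
    have h := congrArg (brk z 0) hRi
    rwa [brk_listPow_append hz h0, brk_listPow_append hz h0, hμ i hi] at h
  have Ej : j * z.length + brk z 0 (subst (listPow z j) U₁) = a * z.length + μ := by
    have h := congrArg (brk z 0) hRj
    rwa [brk_listPow_append hz h0, brk_listPow_append hz h0, hμ j hj] at h
  have hlt : i * z.length < j * z.length := (Nat.mul_lt_mul_right hℓ).mpr hij
  rcases dichotomy hp U₁ 0 with hfull | ⟨ν, κ, haff⟩
  · rw [hfull i hi, subst_length, listPow_length] at Ei
    rw [hfull j hj, subst_length, listPow_length] at Ej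
    have hm : U₁.countP (fun c => c.isNone) * (i * z.length) ≤
        U₁.countP (fun c => c.isNone) * (j * z.length) := Nat.mul_le_mul_left _ hlt.le
    have key : i * z.length + (U₁.countP (fun c => c.isNone) * (i * z.length) +
        U₁.countP (fun c => c.isSome)) < j * z.length +
        (U₁.countP (fun c => c.isNone) * (j * z.length) + U₁.countP (fun c => c.isSome)) := by
      exact Nat.add_lt_add_of_lt_of_le hlt
        (Nat.add_le_add_right hm (U₁.countP (fun c => c.isSome)))
    exact absurd (Ei.trans Ej.symm) (Nat.ne_of_lt key)
  · rw [haff i hi] at Ei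
    rw [haff j hj] at Ej
    have hm : ν * (i * z.length) ≤ ν * (j * z.length) := Nat.mul_le_mul_left _ hlt.le
    have key : i * z.length + (ν * (i * z.length) + κ) <
        j * z.length + (ν * (j * z.length) + κ) := by
      exact Nat.add_lt_add_of_lt_of_le hlt (Nat.add_le_add_right hm κ)
    exact absurd (Ei.trans Ej.symm) (Nat.ne_of_lt key)


lemma core_aux {z : List Γ} (hp : Primitive z) {N i j : ℕ} (hi : 1 ≤ i) (hij : i < j)
    (IH : ∀ U' V' : List (Option Γ), U'.length + V'.length ≤ N →
      subst (listPow z i) U' = subst (listPow z i) V' →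
      subst (listPow z j) U' = subst (listPow z j) V' →
      ∀ k, 1 ≤ k → subst (listPow z k) U' = subst (listPow z k) V')
    (u₀ v₀ : List Γ) (U₁ V₁ : List (Option Γ))
    (hlen : (u₀.map some ++ none :: U₁).length + (v₀.map some ++ none :: V₁).length ≤ N + 1)
    (hle : u₀.length ≤ v₀.length)
    (hEi : subst (listPow z i) (u₀.map some ++ none :: U₁) =
      subst (listPow z i) (v₀.map some ++ none :: V₁))
    (hEj : subst (listPow z j) (u₀.map some ++ none :: U₁) =
      subst (listPow z j) (v₀.map some ++ none :: V₁)) :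
    ∀ k, 1 ≤ k → subst (listPow z k) (u₀.map some ++ none :: U₁) =
      subst (listPow z k) (v₀.map some ++ none :: V₁) := by
  classical
  have hz : z ≠ [] := hp.1
  have hℓ : 0 < z.length := List.length_pos_iff.mpr hz
  rw [subst_block, subst_block] at hEi hEj
  have hu : u₀ <+: v₀ :=
    List.prefix_of_prefix_length_le ⟨_, rfl⟩ (by rw [hEj]; exact ⟨_, rfl⟩) hle
  obtain ⟨t, rfl⟩ := hu
  rw [List.append_assoc] at hEi hEj
  have Ri := List.append_cancel_left hEi
  have Rj := List.append_cancel_left hEj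
  intro k hk
  rw [subst_block, subst_block, List.append_assoc]
  refine congrArg (fun s => u₀ ++ s) ?_
  -- maximal power of z that is a prefix of t
  set P : ℕ → Prop := fun n => listPow z n <+: t with hP
  have hP0 : P 0 := by
    rw [hP]
    simp only [listPow_zero]
    exact List.nil_prefix
  set a := Nat.findGreatest P t.length with ha
  have hpref : listPow z a <+: t := Nat.findGreatest_spec (Nat.zero_le _) hP0
  have hmax : ¬ listPow z (a+1) <+: t := by
    intro hcon
    have hlen2 : (a+1) * z.length ≤ t.length := by
      have h := hcon.length_le
      rwa [listPow_length] at h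
    have h2 : a + 1 ≤ t.length := le_trans (Nat.le_mul_of_pos_right _ hℓ) hlen2
    exact absurd hcon (Nat.findGreatest_is_greatest (Nat.lt_succ_self _) h2)
  have ht : t = listPow z a ++ t.drop (a * z.length) := by
    have h := List.prefix_iff_eq_append.mp hpref
    rw [listPow_length] at h
    exact h.symm
  set tb := t.drop (a * z.length) with htbdef
  by_cases h1 : tb = []
  · -- good case : t is exactly a power of z; recurse on smaller equation
    rw [h1, List.append_nil] at ht
    have hAi : subst (listPow z i) U₁ = listPow z a ++ subst (listPow z i) V₁ := by
      have h2 : listPow z i ++ subst (listPow z i) U₁ =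
          listPow z i ++ (listPow z a ++ subst (listPow z i) V₁) := by
        rw [Ri, ht, ← List.append_assoc, listPow_comm z a i, List.append_assoc]
      exact List.append_cancel_left h2
    have hAj : subst (listPow z j) U₁ = listPow z a ++ subst (listPow z j) V₁ := by
      have h2 : listPow z j ++ subst (listPow z j) U₁ =
          listPow z j ++ (listPow z a ++ subst (listPow z j) V₁) := by
        rw [Rj, ht, ← List.append_assoc, listPow_comm z a j, List.append_assoc]
      exact List.append_cancel_left h2
    have hlen' : U₁.length + ((listPow z a).map some ++ V₁).length ≤ N := by
      have h3 : a * z.length ≤ t.length := by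
        have h := hpref.length_le
        rwa [listPow_length] at h
      simp only [List.length_append, List.length_map, List.length_cons, listPow_length] at hlen ⊢
      omega
    have hrec := IH U₁ ((listPow z a).map some ++ V₁) hlen'
      (by rw [subst_append, subst_lift]; exact hAi)
      (by rw [subst_append, subst_lift]; exact hAj) k hk
    rw [subst_append, subst_lift] at hrec
    rw [hrec, ht, ← List.append_assoc, listPow_comm z k a, List.append_assoc]
  · -- kill case
    have hnp : ¬ z <+: tb := by
      intro hcon
      apply hmax
      obtain ⟨w, hw⟩ := hcon
      refine ⟨w, ?_⟩
      rw [listPow_add, listPow_one, List.append_assoc, hw, ← ht]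
    rw [ht, List.append_assoc] at Ri Rj
    exact (kill hp U₁ V₁ tb a i j hi hij h1 hnp Ri Rj).elim

lemma core {z : List Γ} (hp : Primitive z) :
    ∀ (N : ℕ) (U V : List (Option Γ)), U.length + V.length ≤ N →
    ∀ {i j : ℕ}, 1 ≤ i → i < j →
    subst (listPow z i) U = subst (listPow z i) V →
    subst (listPow z j) U = subst (listPow z j) V →
    ∀ k, 1 ≤ k → subst (listPow z k) U = subst (listPow z k) V := by
  intro N
  induction N with
  | zero =>
    intro U V hlen i j hi hij hEi hEj k hk
    have hU : U = [] := List.length_eq_zero_iff.mp (by omega)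
    have hV : V = [] := List.length_eq_zero_iff.mp (by omega)
    rw [hU, hV]
  | succ N ih =>
    intro U V hlen i j hi hij hEi hEj k hk
    have hz : z ≠ [] := hp.1
    have hℓ : 0 < z.length := List.length_pos_iff.mpr hz
    have hj : 1 ≤ j := le_trans hi hij.le
    have hlt : i * z.length < j * z.length := (Nat.mul_lt_mul_right hℓ).mpr hij
    by_cases hmU : U.countP (fun c => c.isNone) = 0
    · by_cases hmV : V.countP (fun c => c.isNone) = 0
      · rw [subst_const hmU (listPow z k) (listPow z i), hEi,
          subst_const hmV (listPow z i) (listPow z k)]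
      · exfalso
        have e1 : (subst (listPow z i) V).length = (subst (listPow z j) V).length := by
          rw [← hEi, ← hEj, subst_const hmU (listPow z i) (listPow z j)]
        rw [subst_length, subst_length, listPow_length, listPow_length] at e1
        have hmV1 : 0 < V.countP (fun c => c.isNone) := Nat.pos_of_ne_zero hmV
        have h2 := Nat.mul_lt_mul_of_pos_left hlt hmV1
        exact absurd e1 (Nat.ne_of_lt (Nat.add_lt_add_right h2 _))
    · by_cases hmV : V.countP (fun c => c.isNone) = 0
      · exfalso
        have e1 : (subst (listPow z i) U).length = (subst (listPow z j) U).length := by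
          rw [hEi, hEj, subst_const hmV (listPow z i) (listPow z j)]
        rw [subst_length, subst_length, listPow_length, listPow_length] at e1
        have hmU1 : 0 < U.countP (fun c => c.isNone) := Nat.pos_of_ne_zero hmU
        have h2 := Nat.mul_lt_mul_of_pos_left hlt hmU1
        exact absurd e1 (Nat.ne_of_lt (Nat.add_lt_add_right h2 _))
      · obtain ⟨u₀, U₁, rfl⟩ := exists_block hmU
        obtain ⟨v₀, V₁, rfl⟩ := exists_block hmV
        rcases le_total u₀.length v₀.length with hle | hle
        · exact core_aux hp hi hij
            (fun U' V' h hEi' hEj' => ih U' V' h hi hij hEi' hEj')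
            u₀ v₀ U₁ V₁ hlen hle hEi hEj k hk
        · exact (core_aux hp hi hij
            (fun U' V' h hEi' hEj' => ih U' V' h hi hij hEi' hEj')
            v₀ u₀ V₁ U₁ (by omega) hle hEi.symm hEj.symm k hk).symm


/-! ### translation between the family (pq)^k p and the family (qp)^k -/

lemma pq_shift (p q : List Γ) (k : ℕ) :
    listPow (p ++ q) k ++ p = p ++ listPow (q ++ p) k := by
  induction k with
  | zero => simp [listPow_zero]
  | succ k ih =>
    rw [listPow_succ, listPow_succ, List.append_assoc, ih]
    simp [List.append_assoc]

def hat (p : List Γ) (U : List (Option Γ)) : List (Option Γ) :=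
  U.flatMap fun c => c.elim (p.map some ++ [none]) (fun a => [some a])

lemma hat_nil (p : List Γ) : hat p [] = [] := rfl

lemma hat_cons (p : List Γ) (c : Option Γ) (U : List (Option Γ)) :
    hat p (c :: U) = (c.elim (p.map some ++ [none]) (fun a => [some a])) ++ hat p U := by
  simp [hat]

lemma subst_hat (p q : List Γ) (U : List (Option Γ)) (k : ℕ) :
    subst (listPow (p ++ q) k ++ p) U = subst (listPow (q ++ p) k) (hat p U) := by
  induction U with
  | nil => rfl
  | cons c U ih =>
    cases c with
    | some a =>
      rw [subst_cons_some, hat_cons]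
      show _ = subst _ ([some a] ++ hat p U)
      rw [subst_append, ih]
      rfl
    | none =>
      rw [subst_cons_none, hat_cons]
      have h2 : subst (listPow (q ++ p) k) ([none] : List (Option Γ)) = listPow (q ++ p) k := by
        rw [show ([none] : List (Option Γ)) = none :: [] from rfl, subst_cons_none, subst_nil,
          List.append_nil]
      show _ = subst (listPow (q ++ p) k) ((p.map some ++ [none]) ++ hat p U)
      rw [subst_append, subst_append, subst_lift, h2, ih, pq_shift]

lemma listPow_nil (k : ℕ) : listPow ([] : List Γ) k = [] := by
  induction k with
  | zero => rfl
  | succ k ih => rw [listPow_succ, ih]; rfl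

lemma prim_conj {p q : List Γ} (hp : Primitive (p ++ q)) : Primitive (q ++ p) := by
  constructor
  · intro h
    apply hp.1
    have h2 := congrArg List.length h
    simp only [List.length_append, List.length_nil] at h2
    have : p.length = 0 ∧ q.length = 0 := by omega
    rw [List.length_eq_zero_iff.mp this.1, List.length_eq_zero_iff.mp this.2]
    rfl
  · intro w k hqp
    rcases eq_or_ne w [] with rfl | hw
    · exfalso
      rw [listPow_nil] at hqp
      apply hp.1
      have h2 := congrArg List.length hqp
      simp only [List.length_append, List.length_nil] at h2
      have : p.length = 0 ∧ q.length = 0 := by omega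
      rw [List.length_eq_zero_iff.mp this.1, List.length_eq_zero_iff.mp this.2]
      rfl
    have hL : 0 < w.length := List.length_pos_iff.mpr hw
    have hqlen : q.length ≤ k * w.length := by
      have h2 := congrArg List.length hqp
      rw [listPow_length] at h2
      simp only [List.length_append] at h2
      omega
    have hce : q.length / w.length * w.length + q.length % w.length = q.length := by
      rw [Nat.mul_comm]
      exact Nat.div_add_mod q.length w.length
    have helt : q.length % w.length < w.length := Nat.mod_lt _ hL
    set c := q.length / w.length with hc
    set e := q.length % w.length with he
    clear_value c e
    have hck : c ≤ k := by
      have h2 : c * w.length ≤ k * w.length := by omega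
      exact Nat.le_of_mul_le_mul_right h2 hL
    have hqpref : q <+: listPow w k := ⟨p, hqp⟩
    have hwc : listPow w c <+: q := by
      refine List.prefix_of_prefix_length_le ?_ hqpref ?_
      · refine ⟨listPow w (k - c), ?_⟩
        rw [← listPow_add]
        congr 1
        omega
      · rw [listPow_length]
        omega
    obtain ⟨u, hqu⟩ := hwc
    have hulen : u.length = e := by
      have h2 := congrArg List.length hqu
      simp only [List.length_append, listPow_length] at h2
      omega
    have hup : u ++ p = listPow w (k - c) := by
      have h2 : listPow w c ++ (u ++ p) = listPow w c ++ listPow w (k - c) := by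
        rw [← List.append_assoc, hqu, hqp, ← listPow_add]
        congr 1
        omega
      exact List.append_cancel_left h2
    by_cases he0 : e = 0
    · have hu0 : u = [] := List.length_eq_zero_iff.mp (by omega)
      subst hu0
      rw [List.nil_append] at hup
      rw [List.append_nil] at hqu
      have hpq : p ++ q = listPow w k := by
        rw [hup, ← hqu, ← listPow_add]
        congr 1
        omega
      exact hp.2 w k hpq
    · have hkc : 1 ≤ k - c := by
        by_contra h2
        push_neg at h2
        have h3 : k - c = 0 := by omega
        rw [h3, listPow_zero] at hup
        have h4 := congrArg List.length hup
        simp only [List.length_append, List.length_nil] at h4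
        omega
      have hupref : u <+: w := by
        refine List.prefix_of_prefix_length_le ⟨p, hup⟩ ?_ (by omega)
        refine ⟨listPow w (k - c - 1), ?_⟩
        rw [← listPow_succ]
        congr 1
        omega
      obtain ⟨v, hwv⟩ := hupref
      have hpv : p = v ++ listPow w (k - c - 1) := by
        have h2 : u ++ p = u ++ (v ++ listPow w (k - c - 1)) := by
          rw [hup, ← List.append_assoc, hwv, ← listPow_succ]
          congr 1
          omega
        exact List.append_cancel_left h2
      have haux : ∀ n, v ++ (listPow (u ++ v) n ++ u) = listPow (v ++ u) (n + 1) := by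
        intro n
        induction n with
        | zero => simp [listPow_zero, listPow_succ]
        | succ n ihn =>
          rw [listPow_succ, listPow_succ, ← ihn]
          simp [List.append_assoc]
      have hpq : p ++ q = listPow (v ++ u) k := by
        rw [hpv, ← hqu, List.append_assoc, ← List.append_assoc (listPow w (k - c - 1))]
        have h2 : listPow w (k - c - 1) ++ listPow w c = listPow (u ++ v) (k - 1) := by
          rw [← listPow_add, hwv]
          congr 1
          omega
        rw [h2, haux (k - 1)]
        congr 1
        omega
      exact hp.2 _ k hpq

end SolPQP

/-- for a one-variable equation E and a primitive word pq, the
set sol(E) ∩ [(pq)⁺p] is either all of [(pq)⁺p] or has at most one element. -/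
theorem sol_inter_pqp {Γ : Type*} (U V : List (Option Γ)) (p q : List Γ)
    (hprim : Primitive (p ++ q)) :
    (∀ i : ℕ, 1 ≤ i → subst (listPow (p ++ q) i ++ p) U = subst (listPow (p ++ q) i ++ p) V) ∨
    (∀ i j : ℕ, 1 ≤ i → 1 ≤ j →
      subst (listPow (p ++ q) i ++ p) U = subst (listPow (p ++ q) i ++ p) V →
      subst (listPow (p ++ q) j ++ p) U = subst (listPow (p ++ q) j ++ p) V →
      i = j) := by
  classical
  by_cases H : ∀ i : ℕ, 1 ≤ i →
      subst (listPow (p ++ q) i ++ p) U = subst (listPow (p ++ q) i ++ p) V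
  · exact Or.inl H
  · refine Or.inr ?_
    intro i j hi hj hEi hEj
    by_contra hne
    apply H
    have hprim' : Primitive (q ++ p) := SolPQP.prim_conj hprim
    rw [SolPQP.subst_hat p q U i, SolPQP.subst_hat p q V i] at hEi
    rw [SolPQP.subst_hat p q U j, SolPQP.subst_hat p q V j] at hEj
    have key : ∀ k, 1 ≤ k → subst (listPow (q ++ p) k) (SolPQP.hat p U) =
        subst (listPow (q ++ p) k) (SolPQP.hat p V) := by
      rcases lt_trichotomy i j with hij | hij | hij
      · exact SolPQP.core hprim' _ _ _ le_rfl hi hij hEi hEj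
      · exact absurd hij hne
      · exact SolPQP.core hprim' _ _ _ le_rfl hj hij hEj hEi
    intro k hk
    rw [SolPQP.subst_hat p q U k, SolPQP.subst_hat p q V k]
    exact key k hk
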